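/- Let (A, 𝔛¹) be a Lie–Rinehart algebra with 𝔛¹ finitely generated projective over the commutative algebra A, with dual Ω¹ and dual bases {x_i}, {ω_i}. Define d : A → Ω¹ by da = Σ_i x_i(a) ω_i and d : Ω¹ → ⋀²_A Ω¹ by dω = Σ_{i<j} [x_i(ev(x_j⊗ω)) − x_j(ev(x_i⊗ω)) − ev([x_i,x_j]⊗ω)] ω_i ∧ ω_j. Then d : Ω¹ → ⋀²Ω¹ satisfies the graded Leibniz rule d(aω) = da ∧ ω + a dω for all a ∈ A, ω ∈ Ω¹, and d∘d = 0 on A. -/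

import Mathlib

open Finset

set_option maxHeartbeats 2000000 in
/-- Let `(A, 𝔛¹)` be a Lie–Rinehart algebra with `𝔛¹ = X` finitely
generated projective over the commutative algebra `A`, with dual `Ω¹ = Hom_A(X, A)` and
dual bases `{xb i}`, `{ωb i}` (indexed by `Fin n`).  Define `d : A → Ω¹` by
`d a = ∑ i, (xb i)(a) • ωb i` and `d : Ω¹ → ⋀² Ω¹` by
`d ω = ∑_{i<j} [xᵢ(ev(xⱼ⊗ω)) − xⱼ(ev(xᵢ⊗ω)) − ev([xᵢ,xⱼ]⊗ω)] ωᵢ ∧ ωⱼ`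
(computed inside the exterior algebra of `Ω¹`).  Then `d : Ω¹ → ⋀²Ω¹` satisfies the graded
Leibniz rule `d (a • ω) = d a ∧ ω + a • d ω`, and `d ∘ d = 0` on `A`. -/
theorem stmt_15 (A : Type*) [CommRing A]
    (X : Type*) [AddCommGroup X] [Module A X] [LieRing X]
    [Module.Finite A X] [Module.Projective A X]
    -- the anchor map, written `τ x a = x(a)`
    (τ : X → A → A)
    (hτ_add : ∀ x y a, τ (x + y) a = τ x a + τ y a)
    (hτ_add' : ∀ x a b, τ x (a + b) = τ x a + τ x b)
    (hτ_der : ∀ x a b, τ x (a * b) = a * τ x b + τ x a * b)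
    (hτ_lie : ∀ x y a, τ ⁅x, y⁆ a = τ x (τ y a) - τ y (τ x a))
    (hτ_lin : ∀ (a : A) x b, τ (a • x) b = a * τ x b)
    (hlie_smul : ∀ (a : A) (x y : X), ⁅x, a • y⁆ = τ x a • y + a • ⁅x, y⁆)
    -- dual bases for the fgp module X, with Ω¹ = Hom_A(X, A) and ev(x ⊗ ω) = ω x
    (n : ℕ) (xb : Fin n → X) (ωb : Fin n → (X →ₗ[A] A))
    (hdual : ∀ x : X, ∑ i, (ωb i) x • xb i = x) :
    -- the degree-1 differential, valued in the exterior algebra of Ω¹ = Hom_A(X,A)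
    ∀ d1 : (X →ₗ[A] A) → ExteriorAlgebra A (X →ₗ[A] A),
      (∀ ω : X →ₗ[A] A,
        d1 ω = ∑ i, ∑ j, if i < j then
          (τ (xb i) (ω (xb j)) - τ (xb j) (ω (xb i)) - ω ⁅xb i, xb j⁆) •
            (ExteriorAlgebra.ι A (ωb i) * ExteriorAlgebra.ι A (ωb j)) else 0) →
      -- graded Leibniz rule
      ((∀ (a : A) (ω : X →ₗ[A] A),
        d1 (a • ω) =
          ExteriorAlgebra.ι A (∑ i, τ (xb i) a • ωb i) * ExteriorAlgebra.ι A ω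
            + a • d1 ω) ∧
      -- d ∘ d = 0 on A
      (∀ a : A, d1 (∑ i, τ (xb i) a • ωb i) = 0)) := by
  intro d1 hd1
  have hτ0 : ∀ a, τ 0 a = 0 := by
    intro a
    have h := hτ_add 0 0 a
    rw [add_zero] at h
    exact (left_eq_add.mp h)
  have hτsum : ∀ (s : Finset (Fin n)) (f : Fin n → X) (a : A),
      τ (∑ i ∈ s, f i) a = ∑ i ∈ s, τ (f i) a := by
    intro s f a
    induction s using Finset.induction_on with
    | empty => simpa using hτ0 a
    | insert _ _ h ih => rw [Finset.sum_insert h, Finset.sum_insert h, hτ_add, ih]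
  have hτexp : ∀ (x : X) (a : A), τ x a = ∑ i, ωb i x * τ (xb i) a := by
    intro x a
    conv_lhs => rw [← hdual x]
    rw [hτsum]
    exact Finset.sum_congr rfl fun i _ => hτ_lin _ _ _
  have hωexp : ∀ ω : X →ₗ[A] A, ω = ∑ i, ω (xb i) • ωb i := by
    intro ω
    ext x
    simp only [LinearMap.coe_sum, Finset.sum_apply, LinearMap.smul_apply, smul_eq_mul]
    conv_lhs => rw [← hdual x, map_sum]
    simp only [map_smul, smul_eq_mul]
    exact Finset.sum_congr rfl fun i _ => mul_comm _ _
  set e : Fin n → Fin n → ExteriorAlgebra A (X →ₗ[A] A) := fun i j =>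
    ExteriorAlgebra.ι A (ωb i) * ExteriorAlgebra.ι A (ωb j) with he
  have he_diag : ∀ i, e i i = 0 := fun i => ExteriorAlgebra.ι_sq_zero _
  have he_swap : ∀ i j, e j i = - e i j := fun i j =>
    eq_neg_of_add_eq_zero_left (ExteriorAlgebra.ι_add_mul_swap (ωb j) (ωb i))
  have key : ∀ g : Fin n → Fin n → A,
      (∑ i, ∑ j, g i j • e i j) =
      ∑ i, ∑ j, if i < j then (g i j - g j i) • e i j else 0 := by
    intro g
    have step1 : ∀ i j : Fin n, g i j • e i j =
        (if i < j then g i j • e i j else 0) + (if j < i then g i j • e i j else 0) := by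
      intro i j
      rcases lt_trichotomy i j with h | h | h
      · rw [if_pos h, if_neg (not_lt.mpr h.le), add_zero]
      · subst h; simp [he_diag]
      · rw [if_neg (not_lt.mpr h.le), if_pos h, zero_add]
    calc ∑ i, ∑ j, g i j • e i j
        = ∑ i, ∑ j, ((if i < j then g i j • e i j else 0)
            + (if j < i then g i j • e i j else 0)) :=
          Finset.sum_congr rfl fun i _ => Finset.sum_congr rfl fun j _ => step1 i j
      _ = (∑ i, ∑ j, if i < j then g i j • e i j else 0)
            + ∑ i, ∑ j, if j < i then g i j • e i j else 0 := by
          rw [← Finset.sum_add_distrib]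
          exact Finset.sum_congr rfl fun i _ => Finset.sum_add_distrib
      _ = (∑ i, ∑ j, if i < j then g i j • e i j else 0)
            + ∑ i, ∑ j, if i < j then g j i • e j i else 0 := by
          congr 1
          exact Finset.sum_comm
      _ = ∑ i, ∑ j, if i < j then (g i j - g j i) • e i j else 0 := by
          rw [← Finset.sum_add_distrib]
          refine Finset.sum_congr rfl fun i _ => ?_
          rw [← Finset.sum_add_distrib]
          refine Finset.sum_congr rfl fun j _ => ?_
          split_ifs with h
          · rw [he_swap i j, smul_neg, sub_smul, sub_eq_add_neg]
          · rw [add_zero]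
  constructor
  · intro a ω
    have hprod : ExteriorAlgebra.ι A (∑ i, τ (xb i) a • ωb i) * ExteriorAlgebra.ι A ω
        = ∑ i, ∑ j, (τ (xb i) a * ω (xb j)) • e i j := by
      conv_lhs => rw [hωexp ω]
      rw [map_sum, map_sum, Finset.sum_mul]
      refine Finset.sum_congr rfl fun i _ => ?_
      rw [Finset.mul_sum]
      refine Finset.sum_congr rfl fun j _ => ?_
      rw [map_smul, map_smul, smul_mul_assoc, mul_smul_comm, smul_smul]
    rw [hd1, hd1, hprod, key (fun i j => τ (xb i) a * ω (xb j))]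
    simp only [Finset.smul_sum, smul_ite, smul_zero, smul_smul, LinearMap.smul_apply,
      smul_eq_mul]
    rw [← Finset.sum_add_distrib]
    refine Finset.sum_congr rfl fun i _ => ?_
    rw [← Finset.sum_add_distrib]
    refine Finset.sum_congr rfl fun j _ => ?_
    split_ifs with h
    · rw [← add_smul]
      congr 1
      rw [hτ_der, hτ_der]
      ring
    · rw [add_zero]
  · intro a
    have hda : ∀ x : X, (∑ i, τ (xb i) a • ωb i : X →ₗ[A] A) x = τ x a := by
      intro x
      rw [hτexp x a]
      simp only [LinearMap.coe_sum, Finset.sum_apply, LinearMap.smul_apply, smul_eq_mul]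
      exact Finset.sum_congr rfl fun i _ => mul_comm _ _
    rw [hd1]
    refine Finset.sum_eq_zero fun i _ => Finset.sum_eq_zero fun j _ => ?_
    split_ifs with h
    · rw [hda, hda, hda, hτ_lie, sub_self, zero_smul]
    · rfl
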